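/- Let T be a finite tree (a connected acyclic simple graph). For every walk p in T from a vertex s to a vertex t there exists a walk q in T from s to t such that q visits every vertex that p visits, q traverses each edge of T at most once in each direction (the list of darts of q has no duplicates), and for every nonnegative edge-weight function w on T the total w-weight of q (summing w over traversals) is at most the total w-weight of p. In particular, if an optimal embedding of a uniform line on T exists, then there exists an optimal embedding whose induced walk traverses every edge of T at most once in each direction. -/

import Mathlib

set_option linter.unusedSectionVars false

section Aux

open SimpleGraph

variable {V : Type} [DecidableEq V] {G : SimpleGraph V}

private lemma split_at_dart : ∀ {a b : V} (p : G.Walk a b) (d : G.Dart), d ∈ p.darts →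
    ∃ (q : G.Walk a d.fst) (r : G.Walk d.snd b),
      p = q.append (SimpleGraph.Walk.cons d.adj r) ∧ d ∉ q.darts := by
  intro a b p
  induction p with
  | nil => intro d hd; simp at hd
  | @cons a c b h q ih =>
    intro d hd
    rcases eq_or_ne d ⟨(a, c), h⟩ with rfl | hne
    · exact ⟨SimpleGraph.Walk.nil, q, by simp, by simp⟩
    · have hd' : d ∈ q.darts := by
        rw [SimpleGraph.Walk.darts_cons] at hd
        rcases List.mem_cons.mp hd with h1 | h1
        · exact absurd h1 hne
        · exact h1
      obtain ⟨q', r, heq, hnm⟩ := ih d hd'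
      refine ⟨SimpleGraph.Walk.cons h q', r, ?_, ?_⟩
      · rw [heq]; rfl
      · simp only [SimpleGraph.Walk.darts_cons, List.mem_cons, not_or]
        exact ⟨hne, hnm⟩

private lemma mem_darts_of_cross {u v : V} (h : G.Adj u v)
    (hbr : ¬(G \ fromEdgeSet {s(u, v)}).Reachable v u) :
    ∀ {a b : V} (p : G.Walk a b),
      (G \ fromEdgeSet {s(u, v)}).Reachable v a →
      (G \ fromEdgeSet {s(u, v)}).Reachable b u →
      (⟨(v, u), h.symm⟩ : G.Dart) ∈ p.darts := by
  intro a b p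
  induction p with
  | nil => intro ha hb; exact absurd (ha.trans hb) hbr
  | @cons a c b hac q ih =>
    intro ha hb
    by_cases h1 : (a, c) = (v, u)
    · obtain ⟨rfl, rfl⟩ := Prod.mk.injEq .. ▸ h1
      · rw [SimpleGraph.Walk.darts_cons]
        exact List.mem_cons_self
    · have hne : s(a, c) ≠ s(u, v) := by
        intro hc
        rw [Sym2.eq_iff] at hc
        rcases hc with ⟨rfl, rfl⟩ | ⟨rfl, rfl⟩
        · exact hbr (ha.trans (Reachable.refl _))
        · exact h1 rfl
      have hadj' : (G \ fromEdgeSet {s(u, v)}).Adj a c := by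
        rw [sdiff_adj, fromEdgeSet_adj]
        exact ⟨hac, fun hc => hne hc.1⟩
      have := ih (ha.trans hadj'.reachable) hb
      rw [SimpleGraph.Walk.darts_cons]
      exact List.mem_cons_of_mem _ this

private lemma reduce_aux
    (hbr : ∀ ⦃x y : V⦄, G.Adj x y → ¬(G \ fromEdgeSet {s(x, y)}).Reachable x y) :
    ∀ (n : ℕ) {s t : V} (p : G.Walk s t), p.length ≤ n →
    ∃ q : G.Walk s t, (∀ v ∈ p.support, v ∈ q.support) ∧ q.darts.Nodup ∧
      (q.edges : Multiset (Sym2 V)) ≤ (p.edges : Multiset (Sym2 V)) := by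
  intro n
  induction n with
  | zero =>
    intro s t p hp
    have : p.darts = [] := by
      have := SimpleGraph.Walk.length_darts p
      exact List.length_eq_zero_iff.mp (by omega)
    exact ⟨p, fun v hv => hv, this ▸ List.nodup_nil, le_rfl⟩
  | succ n ih =>
    intro s t p hp
    by_cases hnd : p.darts.Nodup
    · exact ⟨p, fun v hv => hv, hnd, le_rfl⟩
    rw [List.nodup_iff_count_le_one] at hnd
    push_neg at hnd
    obtain ⟨d, hd2⟩ := hnd
    have hd2 : 2 ≤ p.darts.count d := hd2
    have hdmem : d ∈ p.darts := List.count_pos_iff.mp (by omega)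
    obtain ⟨q₁, r, rfl, hq₁⟩ := split_at_dart p d hdmem
    have hdr : d ∈ r.darts := by
      have hc : (q₁.append (SimpleGraph.Walk.cons d.adj r)).darts.count d
          = q₁.darts.count d + (d :: r.darts).count d := by
        rw [SimpleGraph.Walk.darts_append, List.count_append, SimpleGraph.Walk.darts_cons]
      rw [hc, List.count_cons_self, List.count_eq_zero_of_not_mem hq₁] at hd2
      exact List.count_pos_iff.mp (by omega)
    obtain ⟨A0, r₂, rfl, -⟩ := split_at_dart r d hdr
    -- A0 : Walk d.snd d.fst, contains the reverse dart
    have hrev : (⟨(d.snd, d.fst), d.adj.symm⟩ : G.Dart) ∈ A0.darts :=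
      mem_darts_of_cross d.adj (fun hc => hbr d.adj hc.symm) A0
        (Reachable.refl _) (Reachable.refl _)
    obtain ⟨A, B, rfl, -⟩ := split_at_dart A0 _ hrev
    -- now p = q₁ · d · (A · d̄ · B) · d · r₂,  A : d.snd → d.snd, B : d.fst → d.fst
    set p' : G.Walk s t :=
      q₁.append (B.append (SimpleGraph.Walk.cons d.adj (A.append r₂))) with hp'
    have hlen : p'.length + 2 =
        (q₁.append (SimpleGraph.Walk.cons d.adj
          ((A.append (SimpleGraph.Walk.cons d.adj.symm B)).append
            (SimpleGraph.Walk.cons d.adj r₂)))).length := by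
      simp [hp', SimpleGraph.Walk.length_append, SimpleGraph.Walk.length_cons]
      omega
    obtain ⟨q, hsup, hnd, hle⟩ := ih p' (by omega)
    refine ⟨q, ?_, hnd, ?_⟩
    · intro v hv
      apply hsup
      simp only [hp', SimpleGraph.Walk.mem_support_append_iff,
        SimpleGraph.Walk.support_cons, List.mem_cons] at hv ⊢
      have h1 : v = d.toProd.2 → v ∈ A.support := fun h => h ▸ A.start_mem_support
      have h2 : v = d.toProd.1 → v ∈ B.support := fun h => h ▸ B.start_mem_support
      tauto
    · refine hle.trans ?_
      rw [Multiset.le_iff_count]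
      intro e
      have hsw : s(d.snd, d.fst) = s(d.fst, d.snd) := Sym2.eq_swap
      simp only [hp', SimpleGraph.Walk.edges_append, SimpleGraph.Walk.edges_cons,
        ← Multiset.coe_countP, Multiset.coe_count, List.count_append, List.count_cons,
        hsw]
      split_ifs <;> omega

end Aux

open SimpleGraph



/-- In a finite tree `T`, every walk `p` from `s` to `t` can be
replaced by a walk `q` from `s` to `t` that visits every vertex `p` visits, traverses
each edge of `T` at most once in each direction (its list of darts has no
duplicates), and whose total weight, for every nonnegative edge-weight function `w`
(summing `w` over traversals), is at most that of `p`.  In particular an optimal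
embedding of a uniform line on `T` can be chosen to traverse every edge at most once
in each direction. -/
theorem tree_walk_reduction {V : Type} [Fintype V] [DecidableEq V]
    (T : SimpleGraph V) (hT : T.IsTree) (s t : V) (p : T.Walk s t) :
    ∃ q : T.Walk s t,
      (∀ v ∈ p.support, v ∈ q.support) ∧
      q.darts.Nodup ∧
      ∀ w : Sym2 V → ℝ, (∀ e, 0 ≤ w e) →
        (q.edges.map w).sum ≤ (p.edges.map w).sum := by
  have hbr : ∀ ⦃x y : V⦄, T.Adj x y → ¬(T \ fromEdgeSet {s(x, y)}).Reachable x y := by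
    intro x y hxy
    have := (isAcyclic_iff_forall_adj_isBridge.mp hT.IsAcyclic) hxy
    exact isBridge_iff.mp this
  obtain ⟨q, hsup, hnd, hle⟩ := reduce_aux hbr p.length p le_rfl
  refine ⟨q, hsup, hnd, ?_⟩
  intro w hw
  obtain ⟨c, hc⟩ := Multiset.le_iff_exists_add.mp hle
  have : ((p.edges : Multiset (Sym2 V)).map w).sum
      = ((q.edges : Multiset (Sym2 V)).map w).sum + (c.map w).sum := by
    rw [hc, Multiset.map_add, Multiset.sum_add]
  have hc0 : 0 ≤ (c.map w).sum := by
    apply Multiset.sum_nonneg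
    intro x hx
    obtain ⟨e, -, rfl⟩ := Multiset.mem_map.mp hx
    exact hw e
  have hq : ((q.edges : Multiset (Sym2 V)).map w).sum = (q.edges.map w).sum := by
    simp [Multiset.sum_coe]
  have hp : ((p.edges : Multiset (Sym2 V)).map w).sum = (p.edges.map w).sum := by
    simp [Multiset.sum_coe]
  linarith
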